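/- arXiv:1207.5523 — 3 statements merged into one kernel-verified Lean document; each statement's English description precedes it below -/
import Mathlib

section
/- Let z ∈ [−1, 1] and let ρ_w be the 4⊗4 Werner state ρ_w = ((4 − z) I + (4z − 1) F)/60 indexed by Fin 4 × Fin 4, reindexed as a matrix σ indexed by Fin 2 × (Fin 2 × Fin 4) via a bijection Fin 4 ≃ Fin 2 × Fin 2 applied to the first tensor factor (so that σ is viewed as a 2⊗8 state). Then the negativity N(σ) = ‖σ^{T_A}‖₁ − 1 (partial transposition over the Fin 2 factor) equals: (−2 − 7z)/10 if z ∈ [−1, −2/7); 0 if z ∈ [−2/7, 2/3]; and (−2 + 3z)/10 if z ∈ (2/3, 1]. -/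
open Matrix

noncomputable section

/-- Partial transpose with respect to the first (qubit) factor. -/
def ptA {B : Type*} (ρ : Matrix (Fin 2 × B) (Fin 2 × B) ℂ) :
    Matrix (Fin 2 × B) (Fin 2 × B) ℂ :=
  fun p q => ρ (q.1, p.2) (p.1, q.2)

/-- The flip (swap) operator on `ℂ⁴ ⊗ ℂ⁴`. -/
def flipOp : Matrix (Fin 4 × Fin 4) (Fin 4 × Fin 4) ℂ :=
  fun p q => if p.1 = q.2 ∧ p.2 = q.1 then 1 else 0

/-- The `4 ⊗ 4` Werner state with parameter `z`. -/
def werner4 (z : ℝ) : Matrix (Fin 4 × Fin 4) (Fin 4 × Fin 4) ℂ :=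
  ((((4 : ℂ) - (z : ℂ)) / 60) • 1) + ((((4 : ℂ) * (z : ℂ) - 1) / 60) • flipOp)

/-- The inverse of the bijection `Fin 4 ≃ Fin 2 × Fin 2`, `i ↦ (i / 2, i % 2)`. -/
def pair (a b : Fin 2) : Fin 4 := ⟨2 * a.val + b.val, by omega⟩

/-- The `4 ⊗ 4` Werner state seen as a `2 ⊗ 8` state, reindexing the first tensor
factor via `Fin 4 ≃ Fin 2 × Fin 2`, `i ↦ (i / 2, i % 2)`. -/
def wernerAs2x8 (z : ℝ) :
    Matrix (Fin 2 × (Fin 2 × Fin 4)) (Fin 2 × (Fin 2 × Fin 4)) ℂ :=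
  fun p q => werner4 z (pair p.1 p.2.1, p.2.2) (pair q.1 q.2.1, q.2.2)

namespace NegAux

abbrev I16 := Fin 2 × (Fin 2 × Fin 4)

/-- Integer version of the partially transposed flip operator. -/
def GZ : Matrix I16 I16 ℤ := fun p q =>
  if pair q.1 p.2.1 = q.2.2 ∧ p.2.2 = pair p.1 q.2.1 then 1 else 0

/-- Complex version. -/
def Gc : Matrix I16 I16 ℂ := GZ.map (Int.cast)

lemma GZ_cube : GZ * GZ * GZ = (4 : ℤ) • GZ := by decide
lemma GZ_trace : GZ.trace = 4 := by decide
lemma GZ2_trace : (GZ * GZ).trace = 16 := by decide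

lemma trace_map (A : Matrix I16 I16 ℤ) :
    (A.map ((↑·) : ℤ → ℂ)).trace = ((A.trace : ℤ) : ℂ) := by
  simp only [Matrix.trace, Matrix.diag, Matrix.map_apply]
  push_cast
  rfl

lemma map_mul' (A B : Matrix I16 I16 ℤ) :
    (A * B).map (Int.cast : ℤ → ℂ) = A.map Int.cast * B.map Int.cast :=
  Matrix.map_mul (f := Int.castRingHom ℂ)

lemma Gc_mul_Gc : Gc * Gc = (GZ * GZ).map (Int.cast) := by
  rw [Gc, map_mul']

lemma Gc_cube : Gc * (Gc * Gc) = (4 : ℂ) • Gc := by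
  rw [← mul_assoc, Gc_mul_Gc, Gc, ← map_mul', GZ_cube]
  ext p q
  simp only [Matrix.map_apply, Matrix.smul_apply, smul_eq_mul]
  push_cast
  ring

lemma Gc_trace : Gc.trace = 4 := by
  rw [Gc, trace_map, GZ_trace]; norm_num

lemma Gc2_trace : (Gc * Gc).trace = 16 := by
  rw [Gc_mul_Gc, trace_map, GZ2_trace]; norm_num

lemma pair_inj : ∀ a b c d : Fin 2, pair a b = pair c d ↔ a = c ∧ b = d := by decide

/-- Decomposition of the partial transpose of the reindexed Werner state. -/
lemma decomp (z : ℝ) :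
    ptA (wernerAs2x8 z) =
      ((((4 : ℝ) - z) / 60 : ℝ) : ℂ) • (1 : Matrix I16 I16 ℂ)
        + ((((4 : ℝ) * z - 1) / 60 : ℝ) : ℂ) • Gc := by
  ext p q
  have h1 : ((pair q.1 p.2.1, p.2.2) = ((pair p.1 q.2.1, q.2.2) : Fin 4 × Fin 4)) ↔ p = q := by
    obtain ⟨a, b, k⟩ := p; obtain ⟨c, d, l⟩ := q
    revert a b k c d l; decide
  simp only [ptA, wernerAs2x8, werner4, Matrix.add_apply, Matrix.smul_apply, Matrix.one_apply,
    flipOp, Gc, GZ, Matrix.map_apply, smul_eq_mul, h1]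
  push_cast
  split_ifs <;> ring

end NegAux

open NegAux in
/-- The negativity of the `4 ⊗ 4` Werner state viewed as a `2 ⊗ 8` state. -/
theorem negativity_werner_2x8 (z : ℝ) (hz : z ∈ Set.Icc (-1 : ℝ) 1)
    (hH : (ptA (wernerAs2x8 z)).IsHermitian) :
    (∑ i, |hH.eigenvalues i|) - 1 =
      if z < -2/7 then (-2 - 7*z)/10
      else if z ≤ 2/3 then 0
      else (-2 + 3*z)/10 := by
  obtain ⟨hz1, hz2⟩ := hz
  set a : ℝ := (4 - z) / 60 with ha
  set b : ℝ := (4 * z - 1) / 60 with hb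
  set M := ptA (wernerAs2x8 z) with hMdef
  have hM : M = ((a : ℂ)) • 1 + ((b : ℂ)) • Gc := decomp z
  set ev : I16 → ℝ := hH.eigenvalues with hev
  -- Every eigenvalue is one of a, a + 2b, a - 2b.
  have key : ∀ i, ev i = a ∨ ev i = a + 2*b ∨ ev i = a - 2*b := by
    intro i
    have hv := hH.mulVec_eigenvectorBasis i
    set v : I16 → ℂ := ⇑(hH.eigenvectorBasis i) with hvdef
    have hv0 : v ≠ 0 := by
      have h := hH.eigenvectorBasis.orthonormal.ne_zero i
      intro hc
      exact h (by ext j; exact congrFun hc j)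
    have hvc : M *ᵥ v = ((ev i : ℂ)) • v := by
      rw [hv]
      ext j
      simp [Complex.real_smul, hev]
    have step : ∀ c : ℝ, (M - ((c:ℝ):ℂ) • 1) *ᵥ v = (((ev i - c : ℝ)) : ℂ) • v := by
      intro c
      rw [Matrix.sub_mulVec, hvc, Matrix.smul_mulVec, Matrix.one_mulVec]
      ext j
      push_cast
      simp [Pi.smul_apply, Pi.sub_apply, smul_eq_mul]
      ring
    have hzero :
        ((((ev i - a : ℝ)) : ℂ) * ((((ev i - (a + 2*b) : ℝ)) : ℂ) * (((ev i - (a - 2*b) : ℝ)) : ℂ))) • v = 0 := by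
      have hP : (M - ((a:ℝ):ℂ) • 1) * ((M - (((a + 2*b):ℝ):ℂ) • 1) * (M - (((a - 2*b):ℝ):ℂ) • 1)) = 0 := by
        have e1 : M - ((a:ℝ):ℂ) • 1 = (b:ℂ) • Gc := by
          rw [hM]; module
        have e2 : M - (((a + 2*b):ℝ):ℂ) • 1 = (b:ℂ) • Gc - ((2*b : ℝ):ℂ) • 1 := by
          rw [hM]; push_cast; module
        have e3 : M - (((a - 2*b):ℝ):ℂ) • 1 = (b:ℂ) • Gc + ((2*b : ℝ):ℂ) • 1 := by
          rw [hM]; push_cast; module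
        rw [e1, e2, e3]
        have expand : ((b:ℂ) • Gc - ((2*b : ℝ):ℂ) • 1) * ((b:ℂ) • Gc + ((2*b : ℝ):ℂ) • 1)
            = ((b:ℂ)*(b:ℂ)) • (Gc * Gc) - (((2*b:ℝ):ℂ)*((2*b:ℝ):ℂ)) • 1 := by
          simp only [Matrix.sub_mul, Matrix.mul_add, Matrix.smul_mul, Matrix.mul_smul,
            Matrix.one_mul, Matrix.mul_one, smul_smul]
          push_cast
          module
        rw [expand]
        simp only [Matrix.mul_sub, Matrix.mul_smul, Matrix.smul_mul, Matrix.mul_one, smul_smul,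
          Gc_cube]
        push_cast
        module
      calc ((((ev i - a : ℝ)) : ℂ) * ((((ev i - (a + 2*b) : ℝ)) : ℂ) * (((ev i - (a - 2*b) : ℝ)) : ℂ))) • v
          = (((ev i - (a - 2*b) : ℝ)) : ℂ) • ((((ev i - (a + 2*b) : ℝ)) : ℂ) • ((((ev i - a : ℝ)) : ℂ) • v)) := by
            rw [smul_smul, smul_smul]; ring_nf
        _ = (((ev i - (a - 2*b) : ℝ)) : ℂ) • ((((ev i - (a + 2*b) : ℝ)) : ℂ) • ((M - ((a:ℝ):ℂ) • 1) *ᵥ v)) := by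
            rw [step]
        _ = (M - ((a:ℝ):ℂ) • 1) *ᵥ ((((ev i - (a - 2*b) : ℝ)) : ℂ) • ((((ev i - (a + 2*b) : ℝ)) : ℂ) • v)) := by
            simp only [Matrix.mulVec_smul]
        _ = (M - ((a:ℝ):ℂ) • 1) *ᵥ ((((ev i - (a - 2*b) : ℝ)) : ℂ) • ((M - (((a + 2*b):ℝ):ℂ) • 1) *ᵥ v)) := by
            rw [step]
        _ = (M - ((a:ℝ):ℂ) • 1) *ᵥ ((M - (((a + 2*b):ℝ):ℂ) • 1) *ᵥ ((((ev i - (a - 2*b) : ℝ)) : ℂ) • v)) := by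
            simp only [Matrix.mulVec_smul]
        _ = (M - ((a:ℝ):ℂ) • 1) *ᵥ ((M - (((a + 2*b):ℝ):ℂ) • 1) *ᵥ ((M - (((a - 2*b):ℝ):ℂ) • 1) *ᵥ v)) := by
            rw [step]
        _ = ((M - ((a:ℝ):ℂ) • 1) * ((M - (((a + 2*b):ℝ):ℂ) • 1) * (M - (((a - 2*b):ℝ):ℂ) • 1))) *ᵥ v := by
            rw [Matrix.mulVec_mulVec, Matrix.mulVec_mulVec, mul_assoc]
        _ = 0 := by rw [hP, Matrix.zero_mulVec]
    have hprod : ((ev i - a) * ((ev i - (a + 2*b)) * (ev i - (a - 2*b))) : ℝ) = 0 := by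
      rcases smul_eq_zero.mp hzero with h | h
      · exact_mod_cast h
      · exact absurd h hv0
    rcases mul_eq_zero.mp hprod with h | h
    · exact Or.inl (by linarith [sub_eq_zero.mp h])
    rcases mul_eq_zero.mp h with h | h
    · exact Or.inr (Or.inl (by linarith [sub_eq_zero.mp h]))
    · exact Or.inr (Or.inr (by linarith [sub_eq_zero.mp h]))
  -- trace identities
  have card16 : (Fintype.card I16 : ℂ) = 16 := by simp
  have hU2 := (Matrix.mem_unitaryGroup_iff).mp (hH.eigenvectorUnitary).2
  have hdiag : star (hH.eigenvectorUnitary : Matrix I16 I16 ℂ) * M * (hH.eigenvectorUnitary : Matrix I16 I16 ℂ)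
      = Matrix.diagonal (RCLike.ofReal ∘ hH.eigenvalues) := by
    rw [← hH.conjStarAlgAut_star_eigenvectorUnitary]; simp
  set U : Matrix I16 I16 ℂ := (hH.eigenvectorUnitary : Matrix I16 I16 ℂ) with hUdef
  have traceM : M.trace = ((16*a + 4*b : ℝ) : ℂ) := by
    rw [hM]
    simp only [Matrix.trace_add, Matrix.trace_smul, Matrix.trace_one, Gc_trace, smul_eq_mul,
      card16]
    push_cast; ring
  have traceMM : (M * M).trace = ((16*a^2 + 8*a*b + 16*b^2 : ℝ) : ℂ) := by
    rw [hM]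
    simp only [Matrix.mul_add, Matrix.add_mul, Matrix.smul_mul, Matrix.mul_smul, Matrix.one_mul,
      Matrix.mul_one, smul_smul, Matrix.trace_add, Matrix.trace_smul, Matrix.trace_one,
      Gc_trace, Gc2_trace, smul_eq_mul, card16]
    push_cast; ring
  have T1 : ∑ i, ((ev i : ℝ) : ℂ) = M.trace := by
    have h := congrArg Matrix.trace hdiag
    rw [Matrix.trace_mul_cycle, hU2, Matrix.one_mul, Matrix.trace_diagonal] at h
    rw [h]
    exact Finset.sum_congr rfl fun i _ => rfl
  have T2 : ∑ i, (((ev i : ℝ) : ℂ))^2 = (M * M).trace := by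
    have hsq : Matrix.diagonal (RCLike.ofReal ∘ hH.eigenvalues) *
        Matrix.diagonal (RCLike.ofReal ∘ hH.eigenvalues) = star U * (M * M) * U := by
      rw [← hdiag]
      calc (star U * M * U) * (star U * M * U)
          = star U * M * ((U * star U) * (M * U)) := by
            simp only [mul_assoc]
        _ = star U * (M * M) * U := by rw [hU2, one_mul]; simp only [mul_assoc]
    have h := congrArg Matrix.trace hsq
    rw [Matrix.diagonal_mul_diagonal, Matrix.trace_diagonal,
      Matrix.trace_mul_cycle, hU2, Matrix.one_mul] at h
    rw [← h]
    exact Finset.sum_congr rfl fun i _ => by rw [sq]; rfl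
  have S1 : ∑ i, ev i = 16*a + 4*b := by exact_mod_cast T1.trans traceM
  have S2 : ∑ i, (ev i)^2 = 16*a^2 + 8*a*b + 16*b^2 := by exact_mod_cast T2.trans traceMM
  have hsum1 : (16 : ℝ)*a + 4*b = 1 := by rw [ha, hb]; ring
  have ha_pos : 0 < a := by rw [ha]; linarith
  have sum_const16 : ∀ c : ℝ, (∑ _i : I16, c) = 16 * c := by
    intro c
    rw [Finset.sum_const, Finset.card_univ]
    norm_num [nsmul_eq_mul]
  by_cases hlt : z < -2/7
  · rw [if_pos hlt]
    have hbneg : b < 0 := by rw [hb]; linarith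
    have hbne : b ≠ 0 := ne_of_lt hbneg
    have h1 : a + 2*b < 0 := by rw [ha, hb]; linarith
    have h2 : 0 < a - 2*b := by rw [ha, hb]; linarith
    have point : ∀ i, 4*b^2*|ev i| =
        -(a+2*b)*(ev i)^2 + (2*a^2+2*a*b)*(ev i) + (4*a*b^2 - a^3) := by
      intro i
      rcases key i with h | h | h <;> rw [h]
      · rw [abs_of_pos ha_pos]; ring
      · rw [abs_of_neg h1]; ring
      · rw [abs_of_pos h2]; ring
    have hsum : 4*b^2*(∑ i, |ev i|) = 4*b^2*(10*a - 8*b) := by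
      calc 4*b^2*(∑ i, |ev i|) = ∑ i, 4*b^2*|ev i| := by rw [Finset.mul_sum]
        _ = ∑ i, (-(a+2*b)*(ev i)^2 + ((2*a^2+2*a*b)*(ev i) + (4*a*b^2 - a^3))) :=
            Finset.sum_congr rfl fun i _ => by rw [point i]; ring
        _ = -(a+2*b)*(∑ i, (ev i)^2) + ((2*a^2+2*a*b)*(∑ i, ev i) + 16*(4*a*b^2 - a^3)) := by
            rw [Finset.sum_add_distrib, Finset.sum_add_distrib, ← Finset.mul_sum,
              ← Finset.mul_sum, sum_const16]
        _ = 4*b^2*(10*a - 8*b) := by rw [S1, S2]; ring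
    have hfin : ∑ i, |ev i| = 10*a - 8*b :=
      mul_left_cancel₀ (show (4*b^2 : ℝ) ≠ 0 by positivity) hsum
    rw [hfin, ha, hb]; ring
  · rw [if_neg hlt]
    push_neg at hlt
    by_cases hle : z ≤ 2/3
    · rw [if_pos hle]
      have h1 : 0 ≤ a + 2*b := by rw [ha, hb]; linarith
      have h2 : 0 ≤ a - 2*b := by rw [ha, hb]; linarith
      have habs : ∀ i, |ev i| = ev i := by
        intro i
        apply abs_of_nonneg
        rcases key i with h | h | h <;> rw [h] <;> linarith
      rw [Finset.sum_congr rfl fun i _ => habs i, S1]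
      linarith
    · rw [if_neg hle]
      push_neg at hle
      have hbpos : 0 < b := by rw [hb]; linarith
      have hbne : b ≠ 0 := ne_of_gt hbpos
      have h1 : 0 < a + 2*b := by rw [ha, hb]; linarith
      have h2 : a - 2*b < 0 := by rw [ha, hb]; linarith
      have point : ∀ i, 4*b^2*|ev i| =
          (2*b-a)*(ev i)^2 + (2*a^2-2*a*b)*(ev i) + (4*a*b^2 - a^3) := by
        intro i
        rcases key i with h | h | h <;> rw [h]
        · rw [abs_of_pos ha_pos]; ring
        · rw [abs_of_pos h1]; ring
        · rw [abs_of_neg h2]; ring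
      have hsum : 4*b^2*(∑ i, |ev i|) = 4*b^2*(14*a + 8*b) := by
        calc 4*b^2*(∑ i, |ev i|) = ∑ i, 4*b^2*|ev i| := by rw [Finset.mul_sum]
          _ = ∑ i, ((2*b-a)*(ev i)^2 + ((2*a^2-2*a*b)*(ev i) + (4*a*b^2 - a^3))) :=
              Finset.sum_congr rfl fun i _ => by rw [point i]; ring
          _ = (2*b-a)*(∑ i, (ev i)^2) + ((2*a^2-2*a*b)*(∑ i, ev i) + 16*(4*a*b^2 - a^3)) := by
              rw [Finset.sum_add_distrib, Finset.sum_add_distrib, ← Finset.mul_sum,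
                ← Finset.mul_sum, sum_const16]
          _ = 4*b^2*(14*a + 8*b) := by rw [S1, S2]; ring
      have hfin : ∑ i, |ev i| = 14*a + 8*b :=
        mul_left_cancel₀ (show (4*b^2 : ℝ) ≠ 0 by positivity) hsum
      rw [hfin, ha, hb]; ring
end
end

section
/- Let z ∈ [−1, 1] and let σ be the 4⊗4 Werner state ρ_w = ((4 − z) I + (4z − 1) F)/60 reindexed as a 2⊗8 density matrix via a bijection Fin 4 ≃ Fin 2 × Fin 2 on the first tensor factor. Then the geometric discord of σ equals D(σ) = ((4z − 1)/15)². -/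
open Matrix
open scoped Kronecker

noncomputable section

/-- The squared Frobenius (Hilbert-Schmidt) norm `‖X‖_F² = trace (Xᴴ X)`. -/
def frobSq {m : Type*} [Fintype m] (X : Matrix m m ℂ) : ℝ :=
  (Xᴴ * X).trace.re

/-- The post-measurement state after a von Neumann measurement `{P, I - P}` on the
qubit subsystem `A`. -/
def measured {B : Type*} [Fintype B] [DecidableEq B] (P : Matrix (Fin 2) (Fin 2) ℂ)
    (ρ : Matrix (Fin 2 × B) (Fin 2 × B) ℂ) :
    Matrix (Fin 2 × B) (Fin 2 × B) ℂ :=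
  (P ⊗ₖ (1 : Matrix B B ℂ)) * ρ * (P ⊗ₖ (1 : Matrix B B ℂ)) +
    ((1 - P) ⊗ₖ (1 : Matrix B B ℂ)) * ρ * ((1 - P) ⊗ₖ (1 : Matrix B B ℂ))

/-- The (normalized) geometric discord of a `2 ⊗ n` state. -/
def geomDiscord {B : Type*} [Fintype B] [DecidableEq B]
    (ρ : Matrix (Fin 2 × B) (Fin 2 × B) ℂ) : ℝ :=
  2 * sInf {r : ℝ | ∃ P : Matrix (Fin 2) (Fin 2) ℂ,
    P * P = P ∧ Pᴴ = P ∧ P.trace = 1 ∧ r = frobSq (ρ - measured P ρ)}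

/-! ### Auxiliary machinery -/

/-- The flip permutation on `Fin 2 × Fin 2 × Fin 4`. -/
def flipPermFun (x : Fin 2 × Fin 2 × Fin 4) : Fin 2 × Fin 2 × Fin 4 :=
  (⟨x.2.2.val / 2, by have := x.2.2.isLt; omega⟩,
   ⟨x.2.2.val % 2, by omega⟩, pair x.1 x.2.1)

/-- The flip operator, reindexed as a `16 × 16` matrix. -/
def G : Matrix (Fin 2 × Fin 2 × Fin 4) (Fin 2 × Fin 2 × Fin 4) ℂ :=
  fun p q => if pair p.1 p.2.1 = q.2.2 ∧ p.2.2 = pair q.1 q.2.1 then 1 else 0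

lemma G_cond_iff : ∀ p q : Fin 2 × Fin 2 × Fin 4,
    (pair p.1 p.2.1 = q.2.2 ∧ p.2.2 = pair q.1 q.2.1) ↔ q = flipPermFun p := by decide

lemma G_cond_iff' : ∀ p q : Fin 2 × Fin 2 × Fin 4,
    (pair p.1 p.2.1 = q.2.2 ∧ p.2.2 = pair q.1 q.2.1) ↔ p = flipPermFun q := by decide

lemma G_apply (p q : Fin 2 × Fin 2 × Fin 4) :
    G p q = if q = flipPermFun p then 1 else 0 := by
  unfold G; exact if_congr (G_cond_iff p q) rfl rfl

lemma G_apply' (p q : Fin 2 × Fin 2 × Fin 4) :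
    G p q = if p = flipPermFun q then 1 else 0 := by
  unfold G; exact if_congr (G_cond_iff' p q) rfl rfl

lemma G_mul_apply (X : Matrix (Fin 2 × Fin 2 × Fin 4) (Fin 2 × Fin 2 × Fin 4) ℂ)
    (p q : Fin 2 × Fin 2 × Fin 4) : (G * X) p q = X (flipPermFun p) q := by
  simp [Matrix.mul_apply, G_apply, ite_mul]

lemma mul_G_apply (X : Matrix (Fin 2 × Fin 2 × Fin 4) (Fin 2 × Fin 2 × Fin 4) ℂ)
    (p q : Fin 2 × Fin 2 × Fin 4) : (X * G) p q = X p (flipPermFun q) := by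
  simp [Matrix.mul_apply, G_apply', mul_ite]

lemma G_herm : Gᴴ = G := by
  ext p q
  rw [Matrix.conjTranspose_apply, G_apply, G_apply']
  split_ifs <;> simp

lemma pair_eq_cond : ∀ p q : Fin 2 × Fin 2 × Fin 4,
    ((pair p.1 p.2.1, p.2.2) = (pair q.1 q.2.1, q.2.2)) ↔ p = q := by decide

lemma werner_decomp (z : ℝ) :
    wernerAs2x8 z = (((4 : ℂ) - z) / 60) • 1 + (((4 : ℂ) * z - 1) / 60) • G := by
  ext p q
  show werner4 z (pair p.1 p.2.1, p.2.2) (pair q.1 q.2.1, q.2.2) = _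
  unfold werner4 flipOp G
  simp only [Matrix.add_apply, Matrix.smul_apply, Pi.smul_apply, Matrix.one_apply, smul_eq_mul]
  rw [if_congr (pair_eq_cond p q) rfl rfl]
  rfl

lemma trace_AGBG (A B : Matrix (Fin 2) (Fin 2) ℂ) :
    ((A ⊗ₖ (1 : Matrix (Fin 2 × Fin 4) (Fin 2 × Fin 4) ℂ)) * G *
      (B ⊗ₖ (1 : Matrix (Fin 2 × Fin 4) (Fin 2 × Fin 4) ℂ)) * G).trace
      = 4 * A.trace * B.trace := by
  have key : ∀ p q, ((A ⊗ₖ (1 : Matrix (Fin 2 × Fin 4) (Fin 2 × Fin 4) ℂ)) * G *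
      (B ⊗ₖ (1 : Matrix (Fin 2 × Fin 4) (Fin 2 × Fin 4) ℂ)) * G) p q
      = ∑ y, (A ⊗ₖ (1 : Matrix (Fin 2 × Fin 4) (Fin 2 × Fin 4) ℂ)) p y *
          (B ⊗ₖ (1 : Matrix (Fin 2 × Fin 4) (Fin 2 × Fin 4) ℂ))
            (flipPermFun y) (flipPermFun q) := by
    intro p q
    rw [mul_G_apply, Matrix.mul_assoc]
    simp only [Matrix.mul_apply]
    refine Finset.sum_congr rfl fun y _ => ?_
    rw [show (∑ j, G y j * (B ⊗ₖ (1 : Matrix (Fin 2 × Fin 4) (Fin 2 × Fin 4) ℂ)) j (flipPermFun q))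
        = (G * (B ⊗ₖ (1 : Matrix (Fin 2 × Fin 4) (Fin 2 × Fin 4) ℂ))) y (flipPermFun q)
      from (Matrix.mul_apply).symm, G_mul_apply]
  set_option maxHeartbeats 2000000 in
  simp only [Matrix.trace, Matrix.diag, key, Fintype.sum_prod_type,
    Fin.sum_univ_two, Fin.sum_univ_four]
  set_option maxHeartbeats 2000000 in
  norm_num [flipPermFun, pair, Matrix.kroneckerMap_apply, Matrix.one_apply,
    Matrix.sub_apply, Fin.ext_iff, Prod.ext_iff,
    show ((0:Fin 4):ℕ) = 0 from rfl, show ((1:Fin 4):ℕ) = 1 from rfl,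
    show ((2:Fin 4):ℕ) = 2 from rfl, show ((3:Fin 4):ℕ) = 3 from rfl,
    Matrix.trace, Matrix.diag]
  ring

lemma kron_conjTranspose (A : Matrix (Fin 2) (Fin 2) ℂ)
    (B : Matrix (Fin 2 × Fin 4) (Fin 2 × Fin 4) ℂ) :
    (A ⊗ₖ B)ᴴ = Aᴴ ⊗ₖ Bᴴ := by
  ext p q
  simp [Matrix.conjTranspose_apply, Matrix.kroneckerMap_apply, star_mul']

/-- The squared distance to the post-measurement state is independent of the
projection. -/
lemma frobSq_const (z : ℝ) (P : Matrix (Fin 2) (Fin 2) ℂ)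
    (hP2 : P * P = P) (hPH : Pᴴ = P) (hPt : P.trace = 1) :
    frobSq (wernerAs2x8 z - measured P (wernerAs2x8 z)) = (4 * z - 1) ^ 2 / 450 := by
  set ρ := wernerAs2x8 z with hρ
  set a : ℂ := ((4 : ℂ) - z) / 60 with ha
  set b : ℂ := ((4 : ℂ) * z - 1) / 60 with hb
  set M : Matrix (Fin 2 × Fin 2 × Fin 4) (Fin 2 × Fin 2 × Fin 4) ℂ :=
    P ⊗ₖ (1 : Matrix (Fin 2 × Fin 4) (Fin 2 × Fin 4) ℂ) with hM
  set N : Matrix (Fin 2 × Fin 2 × Fin 4) (Fin 2 × Fin 2 × Fin 4) ℂ :=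
    (1 - P) ⊗ₖ (1 : Matrix (Fin 2 × Fin 4) (Fin 2 × Fin 4) ℂ) with hN
  have hMN : M * N = 0 := by
    rw [hM, hN, ← Matrix.mul_kronecker_mul, mul_sub, mul_one, hP2, sub_self,
      Matrix.zero_kronecker]
  have hNM : N * M = 0 := by
    rw [hM, hN, ← Matrix.mul_kronecker_mul, sub_mul, one_mul, hP2, sub_self,
      Matrix.zero_kronecker]
  have hMM : M * M = M := by
    rw [hM, ← Matrix.mul_kronecker_mul, hP2, Matrix.one_mul]
  have hNN : N * N = N := by
    rw [hN, ← Matrix.mul_kronecker_mul, mul_sub, mul_one, sub_mul, one_mul, hP2,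
      sub_self, sub_zero, Matrix.one_mul]
  have hsum : M + N = 1 := by
    rw [hM, hN, ← Matrix.add_kronecker, add_sub_cancel, Matrix.one_kronecker_one]
  have hMH : Mᴴ = M := by rw [hM, kron_conjTranspose, hPH, Matrix.conjTranspose_one]
  have hNH : Nᴴ = N := by
    rw [hN, kron_conjTranspose, Matrix.conjTranspose_one, Matrix.conjTranspose_sub,
      hPH, Matrix.conjTranspose_one]
  have hρdec : ρ = a • 1 + b • G := werner_decomp z
  have hρH : ρᴴ = ρ := by
    rw [hρdec]
    have ea : a = (((4 - z) / 60 : ℝ) : ℂ) := by rw [ha]; push_cast; ring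
    have eb : b = (((4 * z - 1) / 60 : ℝ) : ℂ) := by rw [hb]; push_cast; ring
    have hsa : star a = a := by rw [ea, Complex.star_def, Complex.conj_ofReal]
    have hsb : star b = b := by rw [eb, Complex.star_def, Complex.conj_ofReal]
    rw [Matrix.conjTranspose_add, Matrix.conjTranspose_smul, Matrix.conjTranspose_smul,
      Matrix.conjTranspose_one, G_herm, hsa, hsb]
  have hX : ρ - measured P ρ = M * ρ * N + N * ρ * M := by
    have h1 : ρ = (M + N) * ρ * (M + N) := by rw [hsum, Matrix.one_mul, Matrix.mul_one]
    show ρ - (M * ρ * M + N * ρ * N) = M * ρ * N + N * ρ * M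
    nth_rewrite 1 [h1]
    noncomm_ring
  -- the trace of XᴴX
  have hXH : (M * ρ * N + N * ρ * M)ᴴ = N * ρ * M + M * ρ * N := by
    simp only [Matrix.conjTranspose_add, Matrix.conjTranspose_mul, hMH, hNH, hρH]
    rw [Matrix.mul_assoc, Matrix.mul_assoc]
  have t2 : ((N * ρ * M) * (N * ρ * M)).trace = 0 := by
    have : (N * ρ * M) * (N * ρ * M) = N * ρ * (M * N) * ρ * M := by noncomm_ring
    rw [this, hMN]; simp
  have t3 : ((M * ρ * N) * (M * ρ * N)).trace = 0 := by
    have : (M * ρ * N) * (M * ρ * N) = M * ρ * (N * M) * ρ * N := by noncomm_ring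
    rw [this, hNM]; simp
  have t1 : ((N * ρ * M) * (M * ρ * N)).trace = (M * ρ * N * ρ).trace := by
    have e1 : (N * ρ * M) * (M * ρ * N) = (N * ρ * (M * M) * ρ) * N := by noncomm_ring
    rw [e1, hMM, Matrix.trace_mul_comm]
    have e2 : N * (N * ρ * M * ρ) = (N * N) * ρ * M * ρ := by noncomm_ring
    rw [e2, hNN, show N * ρ * M * ρ = (N * ρ) * (M * ρ) by noncomm_ring,
      Matrix.trace_mul_comm, show (M * ρ) * (N * ρ) = M * ρ * N * ρ by noncomm_ring]
  have t4 : ((M * ρ * N) * (N * ρ * M)).trace = (M * ρ * N * ρ).trace := by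
    have e1 : (M * ρ * N) * (N * ρ * M) = (M * ρ * (N * N) * ρ) * M := by noncomm_ring
    rw [e1, hNN, Matrix.trace_mul_comm]
    have e2 : M * (M * ρ * N * ρ) = (M * M) * ρ * N * ρ := by noncomm_ring
    rw [e2, hMM]
  -- compute trace (M * ρ * N * ρ)
  have hMρN : M * ρ * N = b • (M * G * N) := by
    rw [hρdec]
    rw [Matrix.mul_add, Matrix.add_mul, Matrix.mul_smul, Matrix.mul_one,
      Matrix.smul_mul, Matrix.mul_smul, Matrix.smul_mul, hMN]
    simp [Matrix.mul_assoc]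
  have htr : (M * ρ * N * ρ).trace = b ^ 2 * (4 : ℂ) := by
    rw [hMρN]
    nth_rewrite 1 [hρdec]
    rw [Matrix.smul_mul, Matrix.mul_add, Matrix.mul_smul, Matrix.mul_one,
      Matrix.mul_smul]
    have h0 : (M * G * N).trace = 0 := by
      rw [Matrix.trace_mul_comm, ← Matrix.mul_assoc, hNM, Matrix.zero_mul,
        Matrix.trace_zero]
    have h4 : (M * G * N * G).trace = 4 := by
      rw [hM, hN, trace_AGBG, hPt]
      rw [Matrix.trace_sub, Matrix.trace_one, hPt]
      norm_num
    simp [Matrix.trace_add, Matrix.trace_smul, h0, h4, smul_eq_mul]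
    ring
  -- put it together
  unfold frobSq
  rw [hX, hXH, Matrix.add_mul, Matrix.mul_add, Matrix.mul_add, Matrix.trace_add,
    Matrix.trace_add, Matrix.trace_add, t1, t2, t3, t4, htr]
  have : (b ^ 2 * 4 + 0 + (0 + b ^ 2 * 4) : ℂ) = (((4 * z - 1) ^ 2 / 450 : ℝ) : ℂ) := by
    rw [hb]; push_cast; ring
  rw [this, Complex.ofReal_re]

/-- The geometric discord of the `4 ⊗ 4` Werner state viewed as a `2 ⊗ 8` state
equals `((4z - 1)/15)²`. -/
theorem geomDiscord_werner_2x8 (z : ℝ) (hz : z ∈ Set.Icc (-1 : ℝ) 1) :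
    geomDiscord (wernerAs2x8 z) = ((4*z - 1)/15) ^ 2 := by
  unfold geomDiscord
  have hset : {r : ℝ | ∃ P : Matrix (Fin 2) (Fin 2) ℂ,
      P * P = P ∧ Pᴴ = P ∧ P.trace = 1 ∧
      r = frobSq (wernerAs2x8 z - measured P (wernerAs2x8 z))}
      = {((4 * z - 1) ^ 2 / 450 : ℝ)} := by
    ext r
    constructor
    · rintro ⟨P, h1, h2, h3, rfl⟩
      exact frobSq_const z P h1 h2 h3
    · rintro rfl
      refine ⟨!![(1:ℂ), 0; 0, 0], ?_, ?_, ?_, ?_⟩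
      · ext i j; fin_cases i <;> fin_cases j <;>
          simp [Matrix.mul_apply, Fin.sum_univ_two]
      · ext i j; fin_cases i <;> fin_cases j <;>
          simp [Matrix.conjTranspose_apply]
      · simp [Matrix.trace, Fin.sum_univ_two]
      · exact (frobSq_const z _ (by ext i j; fin_cases i <;> fin_cases j <;>
          simp [Matrix.mul_apply, Fin.sum_univ_two])
          (by ext i j; fin_cases i <;> fin_cases j <;>
            simp [Matrix.conjTranspose_apply])
          (by simp [Matrix.trace, Fin.sum_univ_two])).symm
  rw [hset, csInf_singleton]
  ring
end
end

section
/- Let z ∈ [−1, −8/13) and let σ be the 4⊗4 Werner state ρ_w = ((4 − z) I + (4z − 1) F)/60 reindexed as a 2⊗8 density matrix via a bijection Fin 4 ≃ Fin 2 × Fin 2 on the first tensor factor. Then σ violates the conjectured inequality D ≥ N²: its geometric discord is strictly smaller than its squared negativity, D(σ) < N(σ)². -/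
open Matrix
open scoped Kronecker

noncomputable section

/-! ### Auxiliary definitions -/

abbrev Idx : Type := Fin 2 × (Fin 2 × Fin 4)

/-- integer version of the partially transposed flip operator -/
def Gz : Matrix Idx Idx ℤ :=
  fun p q => if pair q.1 p.2.1 = q.2.2 ∧ p.2.2 = pair p.1 q.2.1 then 1 else 0

def Gc : Matrix Idx Idx ℂ := (Int.castRingHom ℂ).mapMatrix Gz

/-- integer version of the off-diagonal-block part of the state -/
def Kz : Matrix Idx Idx ℤ :=
  fun p q =>
    if p.1 ≠ q.1 ∧ pair p.1 p.2.1 = q.2.2 ∧ p.2.2 = pair q.1 q.2.1 then 1 else 0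

def Kc : Matrix Idx Idx ℂ := (Int.castRingHom ℂ).mapMatrix Kz

lemma pair_inj {a b c d : Fin 2} : pair a b = pair c d ↔ a = c ∧ b = d := by
  simp only [pair, Fin.ext_iff]
  omega

set_option maxRecDepth 40000 in
lemma Gz_cube' : ∀ p q : Idx, (Gz * Gz * Gz) p q = ((4:ℕ) • Gz) p q := by decide

lemma Gz_cube : Gz * Gz * Gz = (4:ℕ) • Gz := by
  ext p q; exact Gz_cube' p q


lemma Gc_cube : Gc * Gc * Gc = (4:ℂ) • Gc := by
  have h := congrArg (fun X => ((Int.castRingHom ℂ).mapMatrix X)) Gz_cube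
  simp only [_root_.map_mul, map_nsmul] at h
  have h4 : ((4:ℕ) : ℂ) • ((Int.castRingHom ℂ).mapMatrix Gz) = (4:ℂ) • Gc := by norm_num; rfl
  rw [← Nat.cast_smul_eq_nsmul ℂ] at h
  exact h.trans h4

set_option maxRecDepth 40000 in
lemma Gz_trace : Gz.trace = 4 := by decide

set_option maxRecDepth 40000 in
lemma Gz_sq_trace : (Gz * Gz).trace = 16 := by decide

set_option maxRecDepth 40000 in
lemma Kz_trace_sq : (Kzᵀ * Kz).trace = 8 := by decide

lemma trace_mapInt (M : Matrix Idx Idx ℤ) :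
    ((Int.castRingHom ℂ).mapMatrix M).trace = ((M.trace : ℤ) : ℂ) := by
  simp [Matrix.trace, Matrix.diag, RingHom.mapMatrix_apply, Matrix.map_apply]

lemma Gc_trace : Gc.trace = 4 := by
  have := trace_mapInt Gz
  rw [Gz_trace] at this
  norm_num at this
  exact this

lemma Gc_sq_trace : (Gc * Gc).trace = 16 := by
  have h := congrArg (fun X => ((Int.castRingHom ℂ).mapMatrix X).trace) (rfl : Gz * Gz = Gz * Gz)
  have : (Gc * Gc).trace = ((Int.castRingHom ℂ).mapMatrix (Gz * Gz)).trace := by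
    rw [_root_.map_mul]; rfl
  rw [this, trace_mapInt, Gz_sq_trace]; norm_num

lemma pair_prod_eq (p q : Idx) :
    ((pair q.1 p.2.1, p.2.2) = (pair p.1 q.2.1, q.2.2)) ↔ p = q := by
  obtain ⟨p1, p2, p3⟩ := p
  obtain ⟨q1, q2, q3⟩ := q
  simp only [Prod.mk.injEq, pair_inj]
  constructor
  · rintro ⟨⟨e1, e2⟩, e3⟩; exact ⟨e1.symm, e2, e3⟩
  · rintro ⟨e1, e2, e3⟩; exact ⟨⟨e1.symm, e2⟩, e3⟩

lemma ptA_eq (z : ℝ) :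
    ptA (wernerAs2x8 z)
      = ((((4 - z)/60 : ℝ)) : ℂ) • 1 + ((((4*z - 1)/60 : ℝ)) : ℂ) • Gc := by
  ext p q
  simp only [ptA, wernerAs2x8, werner4, Matrix.add_apply, Matrix.smul_apply,
    Matrix.one_apply, flipOp, Gc, RingHom.mapMatrix_apply, Matrix.map_apply, Gz,
    smul_eq_mul, pair_prod_eq]
  push_cast
  split_ifs <;> simp only [RingHom.map_one, RingHom.map_zero] <;> ring

/-! ### Hermitian eigenvalue helpers -/

section herm
variable {n : Type*} [Fintype n] [DecidableEq n] {A : Matrix n n ℂ}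

lemma herm_trace_eq (hA : A.IsHermitian) :
    A.trace = ∑ i, (hA.eigenvalues i : ℂ) := by
  conv_lhs => rw [hA.spectral_theorem, Unitary.conjStarAlgAut_apply]
  rw [Matrix.trace_mul_comm, ← Matrix.mul_assoc,
    Matrix.UnitaryGroup.star_mul_self (Matrix.IsHermitian.eigenvectorUnitary hA),
    Matrix.one_mul, Matrix.trace_diagonal]
  norm_num [Function.comp]

lemma herm_trace_sq_eq (hA : A.IsHermitian) :
    (A * A).trace = ∑ i, ((hA.eigenvalues i : ℂ))^2 := by
  conv_lhs => rw [hA.spectral_theorem, Unitary.conjStarAlgAut_apply]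
  set U := (Matrix.IsHermitian.eigenvectorUnitary hA : Matrix n n ℂ) with hU
  set D := Matrix.diagonal ((RCLike.ofReal ∘ hA.eigenvalues : n → ℂ)) with hD
  have hsU : star U * U = 1 :=
    Matrix.UnitaryGroup.star_mul_self (Matrix.IsHermitian.eigenvectorUnitary hA)
  have key : U * D * star U * (U * D * star U) = U * (D * D) * star U := by
    calc U * D * star U * (U * D * star U)
        = U * (D * ((star U * U) * (D * star U))) := by
          simp only [Matrix.mul_assoc]
      _ = U * (D * D) * star U := by rw [hsU, Matrix.one_mul]; simp only [Matrix.mul_assoc]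
  rw [key, Matrix.trace_mul_comm, ← Matrix.mul_assoc, hsU, Matrix.one_mul,
    hD, Matrix.diagonal_mul_diagonal, Matrix.trace_diagonal]
  norm_num [Function.comp, pow_two]

lemma eigenvector_coe_ne_zero (hA : A.IsHermitian) (i : n) :
    ⇑(hA.eigenvectorBasis i) ≠ 0 := by
  intro h
  exact hA.eigenvectorBasis.orthonormal.ne_zero i (by ext x; exact congrFun h x)

/-- each eigenvalue is a root of any annihilating cubic -/
lemma eigenvalue_root (hA : A.IsHermitian) (c1 c2 c3 : ℂ)
    (h : (A - c1 • 1) * (A - c2 • 1) * (A - c3 • 1) = 0) (i : n) :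
    ((hA.eigenvalues i : ℂ) - c1) * ((hA.eigenvalues i : ℂ) - c2)
      * ((hA.eigenvalues i : ℂ) - c3) = 0 := by
  set v : n → ℂ := ⇑(hA.eigenvectorBasis i) with hv
  set lam : ℂ := ((hA.eigenvalues i : ℝ) : ℂ) with hlam
  have hAv : A *ᵥ v = lam • v := by
    have := hA.mulVec_eigenvectorBasis i
    funext x
    have hx := congrFun this x
    simpa [hv, hlam, Complex.real_smul] using hx
  have step : ∀ c : ℂ, (A - c • 1) *ᵥ v = (lam - c) • v := by
    intro c
    rw [Matrix.sub_mulVec, hAv, Matrix.smul_mulVec, Matrix.one_mulVec, ← sub_smul]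
  have main : ((A - c1 • 1) * (A - c2 • 1) * (A - c3 • 1)) *ᵥ v
      = ((lam - c3) * (lam - c2) * (lam - c1)) • v := by
    rw [← Matrix.mulVec_mulVec, step c3, Matrix.mulVec_smul, ← Matrix.mulVec_mulVec,
      step c2, Matrix.mulVec_smul, step c1, smul_smul, smul_smul]
  rw [h, Matrix.zero_mulVec] at main
  have : ((lam - c1) * (lam - c2) * (lam - c3)) • v = 0 := by
    rw [show (lam - c1) * (lam - c2) * (lam - c3)
      = (lam - c3) * (lam - c2) * (lam - c1) from by ring, ← main]
  rcases smul_eq_zero.mp this with hc | hvz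
  · exact hc
  · exact absurd hvz (eigenvector_coe_ne_zero hA i)

end herm

def P0 : Matrix (Fin 2) (Fin 2) ℂ := !![1, 0; 0, 0]

lemma pair_zero_ne_one (a b : Fin 2) : pair 0 a ≠ pair 1 b := by
  simp only [pair, ne_eq, Fin.ext_iff]; omega

lemma pair_one_ne_zero (a b : Fin 2) : pair 1 a ≠ pair 0 b := by
  simp only [pair, ne_eq, Fin.ext_iff]; omega

lemma kron_P0 : P0 ⊗ₖ (1 : Matrix (Fin 2 × Fin 4) (Fin 2 × Fin 4) ℂ)
    = Matrix.diagonal (fun p : Idx => if p.1 = 0 then 1 else 0) := by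
  ext ⟨p1, p2⟩ ⟨q1, q2⟩
  fin_cases p1 <;> fin_cases q1 <;>
    simp [Matrix.kroneckerMap_apply, Matrix.diagonal_apply, Matrix.one_apply,
      Prod.ext_iff, P0]

lemma kron_P0' : (1 - P0) ⊗ₖ (1 : Matrix (Fin 2 × Fin 4) (Fin 2 × Fin 4) ℂ)
    = Matrix.diagonal (fun p : Idx => if p.1 = 1 then 1 else 0) := by
  ext ⟨p1, p2⟩ ⟨q1, q2⟩
  fin_cases p1 <;> fin_cases q1 <;>
    simp [Matrix.kroneckerMap_apply, Matrix.diagonal_apply, Matrix.one_apply,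
      Prod.ext_iff, P0, Matrix.sub_apply]

lemma frobSq_nonneg {m : Type*} [Fintype m] (X : Matrix m m ℂ) : 0 ≤ frobSq X := by
  unfold frobSq
  rw [Matrix.trace, Complex.re_sum]
  apply Finset.sum_nonneg
  intro p _
  rw [Matrix.diag, Matrix.mul_apply, Complex.re_sum]
  apply Finset.sum_nonneg
  intro q _
  rw [Matrix.conjTranspose_apply]
  have : star (X q p) * X q p = Complex.normSq (X q p) := by
    rw [show star (X q p) = (starRingEnd ℂ) (X q p) from rfl, mul_comm, Complex.mul_conj]
  rw [this, Complex.ofReal_re]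
  exact Complex.normSq_nonneg _

lemma measured_P0 (z : ℝ) :
    wernerAs2x8 z - measured P0 (wernerAs2x8 z) = (((4*z - 1)/60 : ℝ) : ℂ) • Kc := by
  unfold measured
  rw [kron_P0, kron_P0']
  ext p q
  obtain ⟨p1, p2, p3⟩ := p
  obtain ⟨q1, q2, q3⟩ := q
  rw [Matrix.sub_apply, Matrix.add_apply, Matrix.mul_diagonal, Matrix.diagonal_mul,
    Matrix.mul_diagonal, Matrix.diagonal_mul, Matrix.smul_apply]
  fin_cases p1 <;> fin_cases q1 <;>
    simp [wernerAs2x8, werner4, Matrix.one_apply, flipOp, Kc, Kz, Gz,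
      RingHom.mapMatrix_apply, Matrix.map_apply, Matrix.smul_apply, Matrix.add_apply,
      Prod.ext_iff, pair_zero_ne_one, pair_one_ne_zero, smul_eq_mul] <;>
    split_ifs <;> simp <;> ring

lemma frob_measured (z : ℝ) :
    frobSq (wernerAs2x8 z - measured P0 (wernerAs2x8 z)) = 8 * ((4*z - 1)/60)^2 := by
  rw [measured_P0]
  unfold frobSq
  have hKH : Kcᴴ = (Int.castRingHom ℂ).mapMatrix Kzᵀ := by
    ext p q
    simp [Matrix.conjTranspose_apply, Kc, RingHom.mapMatrix_apply, Matrix.map_apply,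
      Matrix.transpose_apply]
  have hsm : ((((4*z - 1)/60 : ℝ) : ℂ) • Kc)ᴴ = (((4*z - 1)/60 : ℝ) : ℂ) • Kcᴴ := by
    rw [Matrix.conjTranspose_smul]
    congr 1
    exact Complex.conj_ofReal _
  rw [hsm, smul_mul_assoc, mul_smul_comm, smul_smul, Matrix.trace_smul, hKH]
  have : ((Int.castRingHom ℂ).mapMatrix Kzᵀ) * Kc
      = (Int.castRingHom ℂ).mapMatrix (Kzᵀ * Kz) := by
    rw [_root_.map_mul]; rfl
  rw [this, trace_mapInt, Kz_trace_sq, smul_eq_mul]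
  have hval : ((((4*z - 1)/60 : ℝ)) : ℂ) * (((4*z - 1)/60 : ℝ) : ℂ) * (((8:ℤ) : ℤ) : ℂ)
      = (((8 * ((4*z - 1)/60)^2 : ℝ)) : ℂ) := by push_cast; ring
  rw [hval, Complex.ofReal_re]

lemma P0_proj : P0 * P0 = P0 := by
  ext i j
  fin_cases i <;> fin_cases j <;> simp [Matrix.mul_apply, Fin.sum_univ_two, P0]

lemma P0_herm : P0ᴴ = P0 := by
  ext i j
  fin_cases i <;> fin_cases j <;> simp [Matrix.conjTranspose_apply, P0]

lemma P0_trace : P0.trace = 1 := by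
  simp [Matrix.trace_fin_two, P0]

/-- For `z ∈ [−1, −8/13)`, the `4 ⊗ 4` Werner state viewed as a `2 ⊗ 8` state
violates the conjectured inequality `D ≥ N²`. -/
theorem werner_2x8_discord_lt_sq_negativity (z : ℝ)
    (hz : z ∈ Set.Ico (-1 : ℝ) (-8/13))
    (hH : (ptA (wernerAs2x8 z)).IsHermitian) :
    geomDiscord (wernerAs2x8 z) < ((∑ i, |hH.eigenvalues i|) - 1) ^ 2 := by
  obtain ⟨hz1, hz2⟩ := hz
  have hz2' : 13 * z < -8 := by linarith
  have hbne : (4*z - 1) ≠ 0 := by nlinarith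
  have hbne' : z * 4 - 1 ≠ 0 := by rwa [mul_comm]
  set M := ptA (wernerAs2x8 z) with hMdef
  have hM : M = (((4 - z)/60 : ℝ) : ℂ) • 1 + (((4*z - 1)/60 : ℝ) : ℂ) • Gc := ptA_eq z
  -- the annihilating cubic for Gc
  have h4 : (4 : Matrix Idx Idx ℂ) * Gc = (4:ℂ) • Gc := by
    have h41 : (4 : Matrix Idx Idx ℂ) = (4:ℂ) • 1 := by
      rw [show ((4:ℂ) • (1 : Matrix Idx Idx ℂ)) = algebraMap ℂ (Matrix Idx Idx ℂ) 4 from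
        (Algebra.algebraMap_eq_smul_one 4).symm]
      exact (map_ofNat (algebraMap ℂ (Matrix Idx Idx ℂ)) 4).symm
    rw [h41, smul_mul_assoc, Matrix.one_mul]
  have hGkey : (Gc - (2:ℂ) • 1) * (Gc + (2:ℂ) • 1) * Gc = 0 := by
    have h21 : ((2:ℂ) • (1 : Matrix Idx Idx ℂ)) = (2 : Matrix Idx Idx ℂ) := by
      rw [show ((2:ℂ) • (1 : Matrix Idx Idx ℂ)) = algebraMap ℂ (Matrix Idx Idx ℂ) 2 from
        (Algebra.algebraMap_eq_smul_one 2).symm]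
      exact map_ofNat (algebraMap ℂ (Matrix Idx Idx ℂ)) 2
    rw [h21]
    have expand : (Gc - 2) * (Gc + 2) * Gc = Gc * Gc * Gc - 4 * Gc := by noncomm_ring
    rw [expand, h4, Gc_cube, sub_self]
  have e1 : M - (((2 + 7*z)/60 : ℝ) : ℂ) • 1
      = (((4*z - 1)/60 : ℝ) : ℂ) • (Gc - (2:ℂ) • 1) := by
    rw [hM]; match_scalars <;> push_cast <;> ring
  have e2 : M - (((6 - 9*z)/60 : ℝ) : ℂ) • 1
      = (((4*z - 1)/60 : ℝ) : ℂ) • (Gc + (2:ℂ) • 1) := by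
    rw [hM]; match_scalars <;> push_cast <;> ring
  have e3 : M - (((4 - z)/60 : ℝ) : ℂ) • 1 = (((4*z - 1)/60 : ℝ) : ℂ) • Gc := by
    rw [hM]; match_scalars <;> push_cast <;> ring
  have hcube : (M - (((2 + 7*z)/60 : ℝ) : ℂ) • 1) * (M - (((6 - 9*z)/60 : ℝ) : ℂ) • 1)
      * (M - (((4 - z)/60 : ℝ) : ℂ) • 1) = 0 := by
    rw [e1, e2, e3]
    simp only [smul_mul_assoc, mul_smul_comm, smul_smul]
    rw [hGkey, smul_zero]
  -- every eigenvalue is one of the three roots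
  have heig : ∀ i, hH.eigenvalues i = (2 + 7*z)/60 ∨ hH.eigenvalues i = (6 - 9*z)/60
      ∨ hH.eigenvalues i = (4 - z)/60 := by
    intro i
    have h := eigenvalue_root hH _ _ _ hcube i
    rcases mul_eq_zero.mp h with h' | h3
    · rcases mul_eq_zero.mp h' with h1 | h2
      · left; exact_mod_cast sub_eq_zero.mp h1
      · right; left; exact_mod_cast sub_eq_zero.mp h2
    · right; right; exact_mod_cast sub_eq_zero.mp h3
  -- trace identities
  have hT1 : ∑ i, hH.eigenvalues i = 1 := by
    have h2 : ((∑ i, hH.eigenvalues i : ℝ) : ℂ) = ((1 : ℝ) : ℂ) := by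
      push_cast
      rw [← herm_trace_eq hH, hM, Matrix.trace_add, Matrix.trace_smul, Matrix.trace_smul,
        Matrix.trace_one, Gc_trace]
      have hc : (Fintype.card Idx : ℂ) = 16 := by simp
      rw [hc, smul_eq_mul, smul_eq_mul]
      push_cast; ring
    exact_mod_cast h2
  have hT2 : ∑ i, (hH.eigenvalues i)^2
      = 16*((4 - z)/60)^2 + 8*((4 - z)/60)*((4*z - 1)/60) + 16*((4*z - 1)/60)^2 := by
    have h2 : ((∑ i, (hH.eigenvalues i)^2 : ℝ) : ℂ)
        = ((16*((4 - z)/60)^2 + 8*((4 - z)/60)*((4*z - 1)/60) + 16*((4*z - 1)/60)^2 : ℝ) : ℂ) := by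
      push_cast
      rw [← herm_trace_sq_eq hH, hM]
      simp only [add_mul, mul_add, smul_mul_assoc, mul_smul_comm, smul_smul,
        Matrix.one_mul, Matrix.mul_one, Matrix.trace_add, Matrix.trace_smul,
        Matrix.trace_one, Gc_trace, Gc_sq_trace, smul_eq_mul]
      have hc : (Fintype.card Idx : ℂ) = 16 := by simp
      rw [hc]
      push_cast; ring
    exact_mod_cast h2
  -- the interpolation polynomial computing |λ|
  set al : ℝ := -15*(2 + 7*z)/(4*z - 1)^2 with hal
  set be : ℝ := 1 + 5*(2 + 7*z)*(1 - z)/(2*(4*z - 1)^2) with hbe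
  set ga : ℝ := -(2 + 7*z)*(6 - 9*z)*(4 - z)/(240*(4*z - 1)^2) with hga
  have habs : ∀ i, |hH.eigenvalues i|
      = al * (hH.eigenvalues i)^2 + be * (hH.eigenvalues i) + ga := by
    intro i
    rcases heig i with h | h | h <;> rw [h, hal, hbe, hga]
    · rw [abs_of_neg (by nlinarith : ((2 + 7*z)/60 : ℝ) < 0)]
      field_simp
      ring
    · rw [abs_of_pos (by nlinarith : (0:ℝ) < (6 - 9*z)/60)]
      field_simp
      ring
    · rw [abs_of_pos (by nlinarith : (0:ℝ) < (4 - z)/60)]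
      field_simp
      ring
  have hsum : ∑ i, |hH.eigenvalues i| = (8 - 7*z)/10 := by
    rw [Finset.sum_congr rfl (fun i _ => habs i), Finset.sum_add_distrib,
      Finset.sum_add_distrib, ← Finset.mul_sum, ← Finset.mul_sum, hT1, hT2,
      Finset.sum_const, Finset.card_univ]
    have hc : (Fintype.card Idx) = 16 := by simp
    rw [hc, nsmul_eq_mul, hal, hbe, hga]
    field_simp
    ring
  rw [hsum]
  -- the geometric-discord upper bound
  have hmem : (8 * ((4*z - 1)/60)^2 : ℝ) ∈ {r : ℝ | ∃ P : Matrix (Fin 2) (Fin 2) ℂ,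
      P * P = P ∧ Pᴴ = P ∧ P.trace = 1
      ∧ r = frobSq (wernerAs2x8 z - measured P (wernerAs2x8 z))} :=
    ⟨P0, P0_proj, P0_herm, P0_trace, (frob_measured z).symm⟩
  have hbdd : BddBelow {r : ℝ | ∃ P : Matrix (Fin 2) (Fin 2) ℂ,
      P * P = P ∧ Pᴴ = P ∧ P.trace = 1
      ∧ r = frobSq (wernerAs2x8 z - measured P (wernerAs2x8 z))} := by
    refine ⟨0, fun r hr => ?_⟩
    obtain ⟨P, _, _, _, hrEq⟩ := hr
    rw [hrEq]
    exact frobSq_nonneg _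
  have hinf : geomDiscord (wernerAs2x8 z) ≤ 2 * (8 * ((4*z - 1)/60)^2) := by
    have := csInf_le hbdd hmem
    unfold geomDiscord
    linarith
  calc geomDiscord (wernerAs2x8 z) ≤ 2 * (8 * ((4*z - 1)/60)^2) := hinf
    _ < ((8 - 7*z)/10 - 1)^2 := by
        nlinarith [mul_pos (show (0:ℝ) < -(8 + 13*z) by linarith)
          (show (0:ℝ) < -(4 + 29*z) by linarith)]
end
end
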